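/- Let K be a finite field with q^n elements and let f ∈ K[X] satisfy deg f ≤ q^n − 1 and f^q ≡ f (mod X^{q^n} − X). If the coefficient of X^{kq+1} in f is α ≠ 0 (for some integer k ≥ 0 with kq+1 ≤ q^n − 1), then the coefficient of X^{k + q^{n−1}} in f equals α^{q^{n−1}}. -/

import Mathlib

open Polynomial Finset

lemma sumPowK {K : Type*} [Field K] [Fintype K] (j : ℕ) :
    ∑ c : K, c ^ j = if j ≠ 0 ∧ (Fintype.card K - 1) ∣ j then -1 else 0 := by
  classical
  by_cases hj : j = 0
  · subst hj
    simp [Finset.card_univ, FiniteField.cast_card_eq_zero]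
  · have h0 : ∑ c : K, c ^ j = ∑ x : Kˣ, ((x : K)) ^ j := by
      let φ : Kˣ ↪ K := ⟨fun x ↦ x, fun _ _ => Units.ext⟩
      have hφ : ∀ a : Kˣ, φ a = (a : K) := fun _ => rfl
      have huniv : univ.map φ = univ \ {0} := by
        ext x
        simpa only [mem_map, mem_univ, Function.Embedding.coeFn_mk, true_and, mem_sdiff,
          mem_singleton, hφ] using (show (∃ a : Kˣ, ↑a = x) ↔ x ≠ 0 from isUnit_iff_ne_zero)
      calc
        ∑ x : K, x ^ j = ∑ x ∈ univ \ {(0 : K)}, x ^ j := by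
          rw [← sum_sdiff ({0} : Finset K).subset_univ, sum_singleton, zero_pow hj, add_zero]
        _ = ∑ x : Kˣ, (x : K) ^ j := by simp [hφ, ← huniv, univ.sum_map φ]
    rw [h0]
    have := FiniteField.sum_pow_units K j
    rw [this]
    simp [hj]

lemma coeff_eq_neg_sum {K : Type*} [Field K] [Fintype K] (f : K[X])
    (hdeg : f.natDegree ≤ Fintype.card K - 1) (m : ℕ) (hm1 : 1 ≤ m)
    (hm2 : m ≤ Fintype.card K - 1) :
    f.coeff m = -∑ c : K, f.eval c * c ^ (Fintype.card K - 1 - m) := by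
  classical
  set r := Fintype.card K - 1 with hr
  have hr1 : 1 ≤ r := le_trans hm1 hm2
  have h1 : ∀ c : K, f.eval c = ∑ i ∈ range (r + 1), f.coeff i * c ^ i := fun c =>
    eval_eq_sum_range' (lt_of_le_of_lt hdeg (Nat.lt_succ_self r)) c
  have key : ∑ c : K, f.eval c * c ^ (r - m)
      = ∑ i ∈ range (r + 1), f.coeff i *
          (if i + (r - m) ≠ 0 ∧ r ∣ i + (r - m) then (-1 : K) else 0) := by
    calc ∑ c : K, f.eval c * c ^ (r - m)
        = ∑ c : K, ∑ i ∈ range (r + 1), f.coeff i * c ^ (i + (r - m)) := by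
          refine Finset.sum_congr rfl fun c _ => ?_
          rw [h1 c, Finset.sum_mul]
          exact Finset.sum_congr rfl fun i _ => by rw [pow_add, mul_assoc]
      _ = ∑ i ∈ range (r + 1), ∑ c : K, f.coeff i * c ^ (i + (r - m)) := Finset.sum_comm
      _ = ∑ i ∈ range (r + 1), f.coeff i * ∑ c : K, c ^ (i + (r - m)) := by
          simp [Finset.mul_sum]
      _ = _ := by
          refine Finset.sum_congr rfl fun i _ => ?_
          rw [sumPowK]
  rw [key, Finset.sum_eq_single m]
  · have hcond : (m + (r - m) ≠ 0 ∧ r ∣ m + (r - m)) := by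
      constructor
      · omega
      · have : m + (r - m) = r := by omega
        rw [this]
    rw [if_pos hcond]
    ring
  · intro i hi hne
    rw [Finset.mem_range] at hi
    have hcond : ¬(i + (r - m) ≠ 0 ∧ r ∣ i + (r - m)) := by
      rintro ⟨hne0, t, ht⟩
      have ht0 : t ≠ 0 := by rintro rfl; omega
      have ht1 : t = 1 := by
        by_contra h2
        have h2' : 2 ≤ t := by omega
        have : r * 2 ≤ r * t := Nat.mul_le_mul_left r h2'
        omega
      rw [ht1] at ht
      omega
    rw [if_neg hcond, mul_zero]
  · intro h
    exact absurd (Finset.mem_range.mpr (by omega)) h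

theorem stmt9 (q n : ℕ) (hq : IsPrimePow q) (hn : 1 ≤ n)
    {K : Type*} [Field K] [Fintype K] (hK : Fintype.card K = q ^ n)
    (f : K[X]) (hdeg : f.natDegree ≤ q ^ n - 1)
    (hcong : (X ^ q ^ n - X : K[X]) ∣ f ^ q - f)
    (k : ℕ) (hk : k * q + 1 ≤ q ^ n - 1)
    (α : K) (hα : α ≠ 0) (hcoeff : f.coeff (k * q + 1) = α) :
    f.coeff (k + q ^ (n - 1)) = α ^ q ^ (n - 1) := by
  classical
  obtain ⟨p, e, hp, he, hpe⟩ := hq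
  replace hp : Nat.Prime p := Nat.prime_iff.mpr hp
  -- characteristic
  have hcharp : CharP K p := by
    have hchar := ringChar.charP K
    obtain ⟨d, hd, hcard⟩ := FiniteField.card K (ringChar K)
    have hcard' : ringChar K ^ (d : ℕ) = p ^ (e * n) := by
      rw [← hcard, hK, ← hpe, ← pow_mul]
    have hdvd : p ∣ ringChar K := by
      have : p ∣ ringChar K ^ (d : ℕ) := by
        rw [hcard']
        exact dvd_pow_self p (by positivity)
      exact hp.dvd_of_dvd_pow this
    have : p = ringChar K := ((Nat.prime_dvd_prime_iff_eq hp hd).mp hdvd)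
    rwa [this]
  haveI := Fact.mk hp
  haveI : ExpChar K p := ExpChar.prime hp
  set Q := q ^ (n - 1) with hQ
  set r := q ^ n - 1 with hr
  set A := k * q + 1 with hA
  set B := k + Q with hB
  have hq2 : 2 ≤ q := by
    rw [← hpe]
    calc 2 ≤ p := hp.two_le
    _ ≤ p ^ e := Nat.le_self_pow (by omega) p
  have hqn : q ^ n = q * Q := by
    rw [hQ, ← pow_succ']
    congr 1
    omega
  have hQpos : 1 ≤ Q := Nat.one_le_pow _ _ (by omega)
  have h2Q : 2 * Q ≤ q * Q := Nat.mul_le_mul_right Q hq2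
  have hr' : r + 1 = q * Q := by rw [hr, ← hqn]; omega
  have hA2 : A ≤ r := hk
  have hkQ : k < Q := by
    have h1 : k * q + 1 ≤ q * Q - 1 := by rw [← hqn]; exact hk
    have h2 : q * k < q * Q := by
      rw [mul_comm q k]
      omega
    exact Nat.lt_of_mul_lt_mul_left h2
  have hB2 : B ≤ r := by omega
  have hcard : Fintype.card K - 1 = r := by rw [hK]
  -- the key arithmetic identity
  have E : (r - A) * Q = (r - B) + r * (Q - 1 - k) := by
    have h1 : A ≤ r := hA2
    have h2 : B ≤ r := hB2
    have h3 : k + 1 ≤ Q := hkQ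
    zify [h1, h2, (by omega : k ≤ Q - 1), (by omega : 1 ≤ Q)]
    have hrz : (r : ℤ) = q * Q - 1 := by
      have h := hr'
      zify at h
      linarith
    simp only [hA, hB]
    push_cast
    linear_combination (k : ℤ) * hrz
  -- evaluations are fixed by frobenius
  have hfc : ∀ c : K, f.eval c ^ q = f.eval c := by
    intro c
    obtain ⟨g, hg⟩ := hcong
    have := congrArg (eval c) hg
    simp only [eval_sub, eval_pow, eval_mul, eval_X] at this
    have hc : c ^ q ^ n = c := by rw [← hK]; exact FiniteField.pow_card c
    rw [hc, sub_self, zero_mul, sub_eq_zero] at this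
    exact this
  have hfcQ : ∀ (j : ℕ) (c : K), f.eval c ^ q ^ j = f.eval c := by
    intro j
    induction j with
    | zero => intro c; simp
    | succ j ih =>
      intro c
      rw [pow_succ, pow_mul, ih, hfc]
  -- frobenius ring hom
  set φ := iterateFrobenius K p (e * (n - 1)) with hφdef
  have hpow : p ^ (e * (n - 1)) = Q := by rw [pow_mul, hpe]
  have hφ : ∀ x : K, φ x = x ^ Q := by
    intro x
    rw [hφdef, iterateFrobenius_def, hpow]
  -- zero-exponent matching
  have hzero : (0 : K) ^ ((r - A) * Q) = (0 : K) ^ (r - B) := by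
    rcases eq_or_lt_of_le hB2 with hBr | hBr
    · have hk' : Q - 1 - k = 0 := by
        have : k + Q = q * Q - 1 := by omega
        have : Q ≤ (q - 1) * Q := Nat.le_mul_of_pos_left Q (by omega)
        omega
      have hE0 : (r - A) * Q = 0 := by rw [E, hk']; omega
      rw [hE0]
      have : r - B = 0 := by omega
      rw [this]
    · have h1 : r - B ≠ 0 := by omega
      have h2 : (r - A) * Q ≠ 0 := by
        have : (r - B) ≤ (r - A) * Q := by rw [E]; omega
        omega
      rw [zero_pow h1, zero_pow h2]
  -- main computation
  have hdeg' : f.natDegree ≤ Fintype.card K - 1 := by rw [hcard]; exact hdeg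
  have hcoB := coeff_eq_neg_sum f hdeg' B (by omega) (by omega)
  have hcoA := coeff_eq_neg_sum f hdeg' A (by omega) (by omega)
  rw [hcard] at hcoA hcoB
  rw [hcoeff] at hcoA
  have main : α ^ Q = f.coeff B := by
    calc α ^ Q = φ α := (hφ α).symm
      _ = φ (-∑ c : K, f.eval c * c ^ (r - A)) := by rw [← hcoA]
      _ = -∑ c : K, φ (f.eval c) * φ (c ^ (r - A)) := by
          rw [map_neg, map_sum]
          congr 1
          exact Finset.sum_congr rfl fun c _ => map_mul φ _ _
      _ = -∑ c : K, f.eval c * c ^ (r - B) := by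
          congr 1
          refine Finset.sum_congr rfl fun c _ => ?_
          rw [hφ, hφ, ← pow_mul, hfcQ (n - 1) c]
          congr 1
          by_cases hc : c = 0
          · rw [hc]; exact hzero
          · rw [E, pow_add, pow_mul]
            have : c ^ r = 1 := by
              rw [← hcard]
              exact FiniteField.pow_card_sub_one_eq_one c hc
            rw [this, one_pow, mul_one]
      _ = f.coeff B := hcoB.symm
  exact main.symm
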